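/- Let (X, Π) be a weighted pure d-dimensional simplicial complex with n = |X(0)| vertices. If 2(d + 1) ≤ n, then λ₂(P∨_d) ≥ 1 − 2/(d+1), i.e., the spectral gap of the top down-up walk is at most 2/(d+1). -/

import Mathlib

open Finset

/-- A weighted pure `d`-dimensional simplicial complex on a finite ground set `V`.
Faces are finsets; a face of cardinality `m` has dimension `m - 1` (so `X(j)` is the
set of faces of cardinality `j + 1`).  The family of faces is downward closed, every
face is contained in a face of cardinality `d + 1` (purity), and a probability
distribution `Π = Π_d` (positive weights summing to `1`) is given on the
top-dimensional faces. -/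
structure WSC (V : Type*) [DecidableEq V] [Fintype V] (d : ℕ) where
  faces : Finset (Finset V)
  empty_mem : ∅ ∈ faces
  down_closed : ∀ β ∈ faces, ∀ α ⊆ β, α ∈ faces
  pure : ∀ α ∈ faces, ∃ β ∈ faces, α ⊆ β ∧ β.card = d + 1
  dim_le : ∀ α ∈ faces, α.card ≤ d + 1
  weight : Finset V → ℝ
  weight_pos : ∀ β ∈ faces, β.card = d + 1 → 0 < weight β
  weight_zero : ∀ β : Finset V, β ∉ faces ∨ β.card ≠ d + 1 → weight β = 0
  weight_sum : ∑ β ∈ faces.filter (fun β => β.card = d + 1), weight β = 1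

namespace WSC

variable {V : Type*} [DecidableEq V] [Fintype V] {d : ℕ}

/-- Auxiliary recursion for the marginal distributions: `Waux X t` is the marginal
distribution `Π_{d - t}` on faces of cardinality `d + 1 - t`, defined by
`Π_j(α) = (1/(j+2)) ∑_{β ∈ X(j+1), β ⊇ α} Π_{j+1}(β)`. -/
noncomputable def Waux (X : WSC V d) : ℕ → Finset V → ℝ
  | 0 => X.weight
  | (t + 1) => fun α =>
      (1 / ((d + 1 - t : ℕ) : ℝ)) *
        ∑ β ∈ X.faces.filter (fun β => α ⊆ β ∧ β.card = d + 1 - t), X.Waux t β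

/-- `X.W m α` is the marginal probability `Π_{m-1}(α)` of the face `α` of cardinality
`m` (dimension `m - 1`). -/
noncomputable def W (X : WSC V d) (m : ℕ) : Finset V → ℝ := X.Waux (d + 1 - m)

/-- The inner product `⟨f, g⟩_{Π_{m-1}}` on `ℝ^{X(m-1)}` (faces of cardinality `m`). -/
noncomputable def inn (X : WSC V d) (m : ℕ) (f g : Finset V → ℝ) : ℝ :=
  ∑ α ∈ X.faces.filter (fun α => α.card = m), X.W m α * f α * g α

/-- The up operator `U_j`: `(U_j f)(β) = (1/(j+2)) ∑_{x ∈ β} f(β \ {x})`, for `β` of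
cardinality `j + 2`.  (The formula is uniform in the cardinality of `β`.) -/
noncomputable def upOp (f : Finset V → ℝ) : Finset V → ℝ :=
  fun β => (1 / (β.card : ℝ)) * ∑ x ∈ β, f (β.erase x)

/-- The down operator `D_{j+1}`:
`(D_{j+1} g)(α) = ∑_{β ∈ X(j+1), β ⊇ α} Π_{j+1}(β) g(β) / ((j+2) Π_j(α))`, for `α` of
cardinality `j + 1`.  (The formula is uniform in the cardinality of `α`.) -/
noncomputable def downOp (X : WSC V d) (g : Finset V → ℝ) : Finset V → ℝ :=
  fun α => ∑ β ∈ X.faces.filter (fun β => α ⊆ β ∧ β.card = α.card + 1),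
      (X.W (α.card + 1) β * g β) / (((α.card : ℝ) + 1) * X.W α.card α)

/-- The down-up walk `P∨_k = U_{k-1} D_k`, acting on functions on `X(k)` (faces of
cardinality `k + 1`). -/
noncomputable def downUp (X : WSC V d) (f : Finset V → ℝ) : Finset V → ℝ :=
  upOp (X.downOp f)

/-- The up-down walk `P∧_k = D_{k+1} U_k`, acting on functions on `X(k)` (faces of
cardinality `k + 1`). -/
noncomputable def upDown (X : WSC V d) (f : Finset V → ℝ) : Finset V → ℝ :=
  X.downOp (upOp f)

/-- The `k`-th non-lazy up-down walk `N_k = ((k+2)/(k+1)) (P∧_k - (1/(k+2)) I)`. -/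
noncomputable def nonLazy (X : WSC V d) (k : ℕ) (f : Finset V → ℝ) : Finset V → ℝ :=
  fun α => (((k : ℝ) + 2) / ((k : ℝ) + 1)) * (X.upDown f α - (1 / ((k : ℝ) + 2)) * f α)

/-- The up-down walk `U_{a,b} = D_{a+1} ⋯ D_b · U_{b-1} ⋯ U_a` on `X(a)` through
`X(b)`, where `t = b - a`. -/
noncomputable def upDownAB (X : WSC V d) (t : ℕ) (f : Finset V → ℝ) : Finset V → ℝ :=
  (X.downOp)^[t] (upOp^[t] f)

/-- The second largest eigenvalue of a row-stochastic operator `M` on `ℝ^{X(m-1)}`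
(faces of cardinality `m`) which is self-adjoint with respect to `⟨·,·⟩_{Π_{m-1}}`
and has stationary distribution `Π_{m-1}`: by the variational principle it is the
supremum of the Rayleigh quotients of (nonzero) functions orthogonal to the
constant function `1`. -/
noncomputable def lam2 (X : WSC V d) (m : ℕ) (M : (Finset V → ℝ) → Finset V → ℝ) : ℝ :=
  sSup { r : ℝ | ∃ f : Finset V → ℝ,
    X.inn m f (fun _ => 1) = 0 ∧ X.inn m f f ≠ 0 ∧
    r = X.inn m f (M f) / X.inn m f f }

/-- The vertices of the link `X_α`: those `x ∉ α` with `α ∪ {x} ∈ X`. -/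
def linkVerts (X : WSC V d) (α : Finset V) : Finset V :=
  Finset.univ.filter (fun x => x ∉ α ∧ insert x α ∈ X.faces)

/-- The link distribution `Π^α_l(τ) = Π_{j+1+l}(α ∪ τ) / (C(|α ∪ τ|, |α|) · Π_j(α))`
for a face `α` of dimension `j` and `τ ∈ X_α(l)`. -/
noncomputable def linkPi (X : WSC V d) (α τ : Finset V) : ℝ :=
  X.W (α ∪ τ).card (α ∪ τ) / ((Nat.choose (α ∪ τ).card α.card : ℝ) * X.W α.card α)

/-- The random walk matrix `M_α` of the graph of the link `X_α`, with entries
`M_α(x, y) = Π^α_1({x, y}) / (2 Π^α_0(x))` for `{x, y} ∈ X_α(1)` and `0` otherwise,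
viewed as an operator on functions on the vertices of the link. -/
noncomputable def linkWalk (X : WSC V d) (α : Finset V) (f : V → ℝ) : V → ℝ :=
  fun x => ∑ y ∈ (X.linkVerts α).filter
      (fun y => y ≠ x ∧ insert y (insert x α) ∈ X.faces),
    (X.linkPi α {x, y} / (2 * X.linkPi α {x})) * f y

/-- The projector `J_α` onto the constant functions on the link: `J_α g` is the
constant function with value `E_{x ∼ Π^α_0}[g(x)]`. -/
noncomputable def linkJ (X : WSC V d) (α : Finset V) (g : V → ℝ) : V → ℝ :=
  fun _ => ∑ x ∈ X.linkVerts α, X.linkPi α {x} * g x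

/-- The inner product `⟨g, h⟩_{Π^α_0}` on functions on the vertices of the link. -/
noncomputable def linkInner (X : WSC V d) (α : Finset V) (g h : V → ℝ) : ℝ :=
  ∑ x ∈ X.linkVerts α, X.linkPi α {x} * g x * h x

/-- The second largest eigenvalue `λ₂(M_α)` of the random walk matrix of the graph
of the link `X_α`, via the variational principle. -/
noncomputable def linkLam2 (X : WSC V d) (α : Finset V) : ℝ :=
  sSup { r : ℝ | ∃ f : V → ℝ,
    X.linkInner α f (fun _ => 1) = 0 ∧ X.linkInner α f f ≠ 0 ∧
    r = X.linkInner α f (X.linkWalk α f) / X.linkInner α f f }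

/-- `X.gammaC m` is `γ_{m-1} = max_{α ∈ X(m-1)} λ₂(M_α)`, the maximum over faces `α`
of cardinality `m` (dimension `m - 1`) of the second eigenvalue of the link walk. -/
noncomputable def gammaC (X : WSC V d) (m : ℕ) : ℝ :=
  sSup { r : ℝ | ∃ α ∈ X.faces, α.card = m ∧ r = X.linkLam2 α }

end WSC


section NearTightAux

namespace WSC

variable {V : Type*} [DecidableEq V] [Fintype V] {d : ℕ}

/-- The top-dimensional faces. -/
def tops (X : WSC V d) : Finset (Finset V) := X.faces.filter (fun β => β.card = d + 1)

/-- The codimension-one faces. -/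
def cod1 (X : WSC V d) : Finset (Finset V) := X.faces.filter (fun α => α.card = d)

/-- `Qv X α` is the total weight of top faces containing `α`. -/
noncomputable def Qv (X : WSC V d) (α : Finset V) : ℝ :=
  ∑ β ∈ (X.tops).filter (fun β => α ⊆ β), X.weight β

/-- `Tv X f α = ∑_{β ⊇ α top} w(β) f(β)`. -/
noncomputable def Tv (X : WSC V d) (f : Finset V → ℝ) (α : Finset V) : ℝ :=
  ∑ β ∈ (X.tops).filter (fun β => α ⊆ β), X.weight β * f β

lemma downFilter_eq (X : WSC V d) (α : Finset V) :
    X.faces.filter (fun β => α ⊆ β ∧ β.card = d + 1)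
      = (X.tops).filter (fun β => α ⊆ β) := by
  rw [tops, Finset.filter_filter]
  exact Finset.filter_congr (fun x _ => and_comm)

lemma weight_nonneg (X : WSC V d) (β : Finset V) : 0 ≤ X.weight β := by
  by_cases h : β ∈ X.faces ∧ β.card = d + 1
  · exact (X.weight_pos β h.1 h.2).le
  · rw [X.weight_zero β (by tauto)]

lemma Qv_nonneg (X : WSC V d) (α : Finset V) : 0 ≤ X.Qv α :=
  Finset.sum_nonneg fun β _ => X.weight_nonneg β

lemma Qv_pos (X : WSC V d) {α : Finset V} (hα : α ∈ X.faces) : 0 < X.Qv α := by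
  obtain ⟨β, hβ, hsub, hcard⟩ := X.pure α hα
  refine Finset.sum_pos' (fun β _ => X.weight_nonneg β) ⟨β, ?_, X.weight_pos β hβ hcard⟩
  exact Finset.mem_filter.2 ⟨Finset.mem_filter.2 ⟨hβ, hcard⟩, hsub⟩

lemma W_top (X : WSC V d) : X.W (d + 1) = X.weight := by
  unfold W
  rw [Nat.sub_self]
  rfl

lemma W_d (X : WSC V d) (α : Finset V) : X.W d α = X.Qv α / ((d : ℝ) + 1) := by
  unfold W
  rw [show d + 1 - d = 1 by omega]
  simp only [Waux, Nat.sub_zero]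
  rw [downFilter_eq]
  rw [one_div, inv_mul_eq_div]
  push_cast
  rfl

lemma downOp_eq (X : WSC V d) (f : Finset V → ℝ) {α : Finset V} (hcard : α.card = d) :
    X.downOp f α = X.Tv f α / X.Qv α := by
  unfold downOp
  simp only [hcard, W_top, W_d, downFilter_eq]
  have h : ((d : ℝ) + 1) * (X.Qv α / ((d : ℝ) + 1)) = X.Qv α := by
    field_simp
  rw [h, ← Finset.sum_div]
  rfl

lemma swap_sum (S T : Finset (Finset V)) (p : Finset V → Finset V → Prop)
    [∀ a b : Finset V, Decidable (p a b)] (F : Finset V → Finset V → ℝ) :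
    ∑ β ∈ S, ∑ α ∈ T.filter (fun α => p α β), F α β
      = ∑ α ∈ T, ∑ β ∈ S.filter (fun β => p α β), F α β := by
  simp only [Finset.sum_filter]
  exact Finset.sum_comm

lemma sum_count (S T : Finset (Finset V)) (p : Finset V → Finset V → Prop)
    [∀ a b : Finset V, Decidable (p a b)] (g : Finset V → ℝ) :
    ∑ α ∈ T, ∑ β ∈ S.filter (fun β => p α β), g β
      = ∑ β ∈ S, ((T.filter (fun α => p α β)).card : ℝ) * g β := by
  rw [← swap_sum]
  exact Finset.sum_congr rfl fun β _ => by rw [Finset.sum_const, nsmul_eq_mul]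

lemma sum_erase_eq (X : WSC V d) {β : Finset V} (hβ : β ∈ X.faces) (hc : β.card = d + 1)
    (F : Finset V → ℝ) :
    ∑ x ∈ β, F (β.erase x) = ∑ α ∈ (X.cod1).filter (fun α => α ⊆ β), F α := by
  refine Finset.sum_bij (fun x _ => β.erase x) ?_ ?_ ?_ (fun x hx => rfl)
  · intro x hx
    refine Finset.mem_filter.2 ⟨Finset.mem_filter.2
      ⟨X.down_closed β hβ _ (Finset.erase_subset x β), ?_⟩, Finset.erase_subset x β⟩
    rw [Finset.card_erase_of_mem hx, hc]
    omega
  · intro a ha b hb h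
    by_contra hne
    have h' : β.erase a = β.erase b := h
    have h1 : a ∈ β.erase b := Finset.mem_erase.2 ⟨hne, ha⟩
    rw [← h'] at h1
    exact (Finset.mem_erase.1 h1).1 rfl
  · intro α hα
    obtain ⟨hα', hsub⟩ := Finset.mem_filter.1 hα
    obtain ⟨hαf, hαc⟩ := Finset.mem_filter.1 hα'
    have hns : ¬ β ⊆ α := by
      intro h
      have := Finset.card_le_card h
      omega
    obtain ⟨x, hxβ, hxα⟩ := Finset.not_subset.1 hns
    refine ⟨x, hxβ, ?_⟩
    have h1 : α ⊆ β.erase x := Finset.subset_erase.2 ⟨hsub, hxα⟩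
    exact (Finset.eq_of_subset_of_card_le h1
      (by rw [Finset.card_erase_of_mem hxβ, hc]; omega)).symm

lemma card_cod1_filter (X : WSC V d) {β : Finset V} (hβ : β ∈ X.faces)
    (hc : β.card = d + 1) :
    (((X.cod1).filter (fun α => α ⊆ β)).card : ℝ) = (d : ℝ) + 1 := by
  have h := X.sum_erase_eq hβ hc (fun _ => (1 : ℝ))
  rw [Finset.sum_const, Finset.sum_const, nsmul_eq_mul, nsmul_eq_mul, mul_one, mul_one] at h
  rw [← h, hc]
  push_cast
  ring

lemma card_cod1_filter_mem (X : WSC V d) {β : Finset V} (hβ : β ∈ X.faces)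
    (hc : β.card = d + 1) {v : V} (hv : v ∈ β) :
    ((((X.cod1).filter (fun α => α ⊆ β)).filter (fun α => v ∈ α)).card : ℝ) = (d : ℝ) := by
  have h := X.sum_erase_eq hβ hc (fun α => if v ∈ α then (1 : ℝ) else 0)
  rw [Finset.sum_boole, Finset.sum_boole] at h
  have hL : β.filter (fun x => v ∈ β.erase x) = β.erase v := by
    rw [← Finset.filter_ne' β v]
    exact Finset.filter_congr (fun x hx => by simp [Finset.mem_erase, hv, eq_comm])
  rw [hL, Finset.card_erase_of_mem hv, hc] at h
  rw [← h]
  push_cast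
  ring

lemma sum_singleton_eq (X : WSC V d) {β : Finset V} (hβ : β ∈ X.faces) (F : Finset V → ℝ) :
    ∑ x ∈ β, F {x}
      = ∑ σ ∈ (X.faces.filter (fun σ => σ.card = 1)).filter (fun σ => σ ⊆ β), F σ := by
  refine Finset.sum_bij (fun x _ => {x}) ?_ ?_ ?_ (fun _ _ => rfl)
  · intro x hx
    exact Finset.mem_filter.2 ⟨Finset.mem_filter.2
      ⟨X.down_closed β hβ _ (Finset.singleton_subset_iff.2 hx), Finset.card_singleton x⟩,
      Finset.singleton_subset_iff.2 hx⟩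
  · intro a _ b _ h
    exact Finset.singleton_injective h
  · intro σ hσ
    obtain ⟨hσ', hsub⟩ := Finset.mem_filter.1 hσ
    obtain ⟨x, rfl⟩ := Finset.card_eq_one.1 (Finset.mem_filter.1 hσ').2
    exact ⟨x, Finset.singleton_subset_iff.1 hsub, rfl⟩

lemma card_verts_filter (X : WSC V d) {β : Finset V} (hβ : β ∈ X.faces)
    (hc : β.card = d + 1) :
    ((((X.faces.filter (fun σ => σ.card = 1)).filter (fun σ => σ ⊆ β))).card : ℝ)
      = (d : ℝ) + 1 := by
  have h := X.sum_singleton_eq hβ (fun _ => (1 : ℝ))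
  rw [Finset.sum_const, Finset.sum_const, nsmul_eq_mul, nsmul_eq_mul, mul_one, mul_one] at h
  rw [← h, hc]
  push_cast
  ring

lemma inn_downUp_eq (X : WSC V d) (f : Finset V → ℝ) :
    X.inn (d + 1) f (X.downUp f)
      = ∑ α ∈ X.cod1, (X.Tv f α) ^ 2 / (((d : ℝ) + 1) * X.Qv α) := by
  unfold inn downUp upOp
  calc ∑ β ∈ X.faces.filter (fun β => β.card = d + 1),
        X.W (d + 1) β * f β * ((1 / (β.card : ℝ)) * ∑ x ∈ β, X.downOp f (β.erase x))
      = ∑ β ∈ X.tops, ∑ α ∈ (X.cod1).filter (fun α => α ⊆ β),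
          X.weight β * f β * ((1 / ((d : ℝ) + 1)) * (X.Tv f α / X.Qv α)) := by
        refine Finset.sum_congr rfl ?_
        intro β hβ
        obtain ⟨hβf, hβc⟩ := Finset.mem_filter.1 hβ
        rw [W_top, hβc, X.sum_erase_eq hβf hβc (X.downOp f)]
        rw [Finset.sum_congr rfl (fun α hα => X.downOp_eq f
          (by
            have := Finset.mem_filter.1 (Finset.mem_filter.1 hα).1
            exact this.2))]
        rw [Finset.mul_sum, Finset.mul_sum]
        push_cast
        rfl
    _ = ∑ α ∈ X.cod1, ∑ β ∈ (X.tops).filter (fun β => α ⊆ β),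
          X.weight β * f β * ((1 / ((d : ℝ) + 1)) * (X.Tv f α / X.Qv α)) := by
        rw [swap_sum]
    _ = ∑ α ∈ X.cod1, (X.Tv f α) ^ 2 / (((d : ℝ) + 1) * X.Qv α) := by
        refine Finset.sum_congr rfl ?_
        intro α hα
        rw [← Finset.sum_mul]
        show X.Tv f α * ((1 / ((d : ℝ) + 1)) * (X.Tv f α / X.Qv α)) = _
        have hQ := (X.Qv_pos (Finset.mem_filter.1 hα).1).ne'
        have hd1 : ((d : ℝ) + 1) ≠ 0 := by positivity
        field_simp

lemma inn_self_eq (X : WSC V d) (f : Finset V → ℝ) :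
    X.inn (d + 1) f f = ∑ β ∈ X.tops, X.weight β * f β * f β := by
  unfold inn
  exact Finset.sum_congr rfl fun β _ => by rw [W_top]

lemma inn_self_nonneg (X : WSC V d) (f : Finset V → ℝ) : 0 ≤ X.inn (d + 1) f f := by
  rw [inn_self_eq]
  refine Finset.sum_nonneg fun β _ => ?_
  rw [mul_assoc]
  exact mul_nonneg (X.weight_nonneg β) (mul_self_nonneg _)

lemma inn_downUp_le_inn_self (X : WSC V d) (f : Finset V → ℝ) :
    X.inn (d + 1) f (X.downUp f) ≤ X.inn (d + 1) f f := by
  have hd1 : (0 : ℝ) < (d : ℝ) + 1 := by positivity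
  rw [inn_downUp_eq]
  have key : ∀ α ∈ X.cod1, (X.Tv f α) ^ 2 / (((d : ℝ) + 1) * X.Qv α)
      ≤ (∑ β ∈ (X.tops).filter (fun β => α ⊆ β), X.weight β * f β * f β) / ((d : ℝ) + 1) := by
    intro α hα
    have hQ : 0 < X.Qv α := X.Qv_pos (Finset.mem_filter.1 hα).1
    have hCS : (X.Tv f α) ^ 2
        ≤ X.Qv α * ∑ β ∈ (X.tops).filter (fun β => α ⊆ β), X.weight β * f β * f β := by
      refine Finset.sum_sq_le_sum_mul_sum_of_sq_eq_mul _
        (fun β _ => X.weight_nonneg β) (fun β _ => ?_) (fun β _ => by ring)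
      rw [mul_assoc]
      exact mul_nonneg (X.weight_nonneg β) (mul_self_nonneg _)
    rw [div_le_div_iff₀ (by positivity) hd1]
    nlinarith [hCS]
  calc ∑ α ∈ X.cod1, (X.Tv f α) ^ 2 / (((d : ℝ) + 1) * X.Qv α)
      ≤ ∑ α ∈ X.cod1,
          (∑ β ∈ (X.tops).filter (fun β => α ⊆ β), X.weight β * f β * f β) / ((d : ℝ) + 1) :=
        Finset.sum_le_sum key
    _ = X.inn (d + 1) f f := by
        rw [← Finset.sum_div, sum_count]
        rw [Finset.sum_congr rfl (fun β hβ => by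
          rw [X.card_cod1_filter (Finset.mem_filter.1 hβ).1 (Finset.mem_filter.1 hβ).2])]
        rw [← Finset.mul_sum, mul_comm, mul_div_assoc, div_self hd1.ne', mul_one]
        rw [inn_self_eq]

/-- Top faces containing `α` and the vertex `v`. -/
noncomputable def Av (X : WSC V d) (v : V) (α : Finset V) : ℝ :=
  ∑ β ∈ ((X.tops).filter (fun β => α ⊆ β)).filter (fun β => v ∈ β), X.weight β

lemma Qv_singleton (X : WSC V d) (v : V) :
    X.Qv {v} = ∑ β ∈ X.tops.filter (fun β => v ∈ β), X.weight β := by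
  unfold Qv
  exact Finset.sum_congr (Finset.filter_congr fun β _ => by
    simp [Finset.singleton_subset_iff]) (fun _ _ => rfl)

lemma tops_weight_sum (X : WSC V d) : ∑ β ∈ X.tops, X.weight β = 1 := X.weight_sum

lemma wit_sum (X : WSC V d) (v : V) (c : ℝ) (s : Finset (Finset V)) :
    ∑ β ∈ s, X.weight β * ((if v ∈ β then (1 : ℝ) else 0) - c)
      = (∑ β ∈ s.filter (fun β => v ∈ β), X.weight β) - c * ∑ β ∈ s, X.weight β := by
  simp only [mul_sub, mul_ite, mul_one, mul_zero, Finset.sum_sub_distrib]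
  rw [Finset.sum_filter, mul_comm c, Finset.sum_mul]

lemma Tv_witness (X : WSC V d) (v : V) (c : ℝ) (α : Finset V) :
    X.Tv (fun β => (if v ∈ β then (1 : ℝ) else 0) - c) α = X.Av v α - c * X.Qv α := by
  unfold Tv Av Qv
  exact X.wit_sum v c _

lemma Av_eq (X : WSC V d) (v : V) (α : Finset V) :
    X.Av v α = ∑ β ∈ (X.tops).filter (fun β => α ⊆ β ∧ v ∈ β), X.weight β := by
  unfold Av
  rw [Finset.filter_filter]

lemma Av_eq_Qv (X : WSC V d) {v : V} {α : Finset V} (hv : v ∈ α) : X.Av v α = X.Qv α := by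
  unfold Av Qv
  rw [Finset.filter_true_of_mem
    (fun β (hβ : β ∈ (X.tops).filter (fun β => α ⊆ β)) => (Finset.mem_filter.1 hβ).2 hv)]

lemma sum_Av (X : WSC V d) (v : V) :
    ∑ α ∈ X.cod1, X.Av v α = ((d : ℝ) + 1) * X.Qv {v} := by
  simp only [Av_eq]
  rw [sum_count]
  rw [Qv_singleton]
  calc ∑ β ∈ X.tops, ((X.cod1.filter (fun α => α ⊆ β ∧ v ∈ β)).card : ℝ) * X.weight β
      = ∑ β ∈ X.tops, (if v ∈ β then ((d : ℝ) + 1) else 0) * X.weight β := by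
        refine Finset.sum_congr rfl fun β hβ => ?_
        obtain ⟨hβf, hβc⟩ := Finset.mem_filter.1 hβ
        by_cases hv : v ∈ β
        · rw [if_pos hv]
          rw [show (X.cod1.filter (fun α => α ⊆ β ∧ v ∈ β))
                = X.cod1.filter (fun α => α ⊆ β) from
              Finset.filter_congr (fun α _ => by simp [hv])]
          rw [X.card_cod1_filter hβf hβc]
        · rw [if_neg hv]
          rw [show (X.cod1.filter (fun α => α ⊆ β ∧ v ∈ β)) = ∅ from
              Finset.filter_false_of_mem (fun α _ => by simp [hv])]
          simp
    _ = ((d : ℝ) + 1) * ∑ β ∈ X.tops.filter (fun β => v ∈ β), X.weight β := by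
        simp only [ite_mul, zero_mul]
        rw [← Finset.sum_filter, Finset.mul_sum]

lemma sum_Qv (X : WSC V d) : ∑ α ∈ X.cod1, X.Qv α = (d : ℝ) + 1 := by
  unfold Qv
  rw [sum_count]
  calc ∑ β ∈ X.tops, ((X.cod1.filter (fun α => α ⊆ β)).card : ℝ) * X.weight β
      = ∑ β ∈ X.tops, ((d : ℝ) + 1) * X.weight β :=
        Finset.sum_congr rfl fun β hβ => by
          rw [X.card_cod1_filter (Finset.mem_filter.1 hβ).1 (Finset.mem_filter.1 hβ).2]
    _ = (d : ℝ) + 1 := by rw [← Finset.mul_sum, X.tops_weight_sum, mul_one]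

lemma sum_Qv_mem (X : WSC V d) (v : V) :
    ∑ α ∈ X.cod1.filter (fun α => v ∈ α), X.Qv α = (d : ℝ) * X.Qv {v} := by
  rw [Qv_singleton]
  unfold Qv
  rw [sum_count]
  calc ∑ β ∈ X.tops, (((X.cod1.filter (fun α => v ∈ α)).filter (fun α => α ⊆ β)).card : ℝ)
          * X.weight β
      = ∑ β ∈ X.tops, (if v ∈ β then (d : ℝ) else 0) * X.weight β := by
        refine Finset.sum_congr rfl fun β hβ => ?_
        obtain ⟨hβf, hβc⟩ := Finset.mem_filter.1 hβ
        by_cases hv : v ∈ β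
        · rw [if_pos hv]
          rw [show ((X.cod1.filter (fun α => v ∈ α)).filter (fun α => α ⊆ β))
                = (X.cod1.filter (fun α => α ⊆ β)).filter (fun α => v ∈ α) from by
              rw [Finset.filter_filter, Finset.filter_filter]
              exact Finset.filter_congr fun α _ => and_comm]
          rw [X.card_cod1_filter_mem hβf hβc hv]
        · rw [if_neg hv]
          rw [show ((X.cod1.filter (fun α => v ∈ α)).filter (fun α => α ⊆ β)) = ∅ from
              Finset.filter_false_of_mem fun α hα hsub =>
                hv (hsub (Finset.mem_filter.1 hα).2)]
          simp
    _ = (d : ℝ) * ∑ β ∈ X.tops.filter (fun β => v ∈ β), X.weight β := by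
        simp only [ite_mul, zero_mul]
        rw [← Finset.sum_filter, Finset.mul_sum]

lemma inn_one_eq (X : WSC V d) (f : Finset V → ℝ) :
    X.inn (d + 1) f (fun _ => 1) = ∑ β ∈ X.tops, X.weight β * f β := by
  unfold inn
  exact Finset.sum_congr rfl fun β _ => by rw [W_top, mul_one]

end WSC

end NearTightAux

/-- **Proposition (near tightness).** Let `(X, Π)` be a weighted pure
`d`-dimensional simplicial complex with `n = |X(0)|` vertices.  If `2(d+1) ≤ n`,
then `λ₂(P∨_d) ≥ 1 - 2/(d+1)`. -/
theorem lam2_downUp_top_ge {V : Type*} [DecidableEq V] [Fintype V] {d : ℕ}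
    (X : WSC V d)
    (hn : 2 * (d + 1) ≤ (X.faces.filter (fun α => α.card = 1)).card) :
    1 - 2 / ((d : ℝ) + 1) ≤ X.lam2 (d + 1) X.downUp := by
  classical
  have hd1 : (0 : ℝ) < (d : ℝ) + 1 := by positivity
  -- choose a vertex of weight at most 1/2
  have hVne : (X.faces.filter (fun α => α.card = 1)).Nonempty :=
    Finset.card_pos.1 (by omega)
  have hsumQ : ∑ σ ∈ X.faces.filter (fun α => α.card = 1), X.Qv σ = (d : ℝ) + 1 := by
    unfold WSC.Qv
    rw [WSC.sum_count]
    calc ∑ β ∈ X.tops,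
          (((X.faces.filter (fun α => α.card = 1)).filter (fun σ => σ ⊆ β)).card : ℝ)
            * X.weight β
        = ∑ β ∈ X.tops, ((d : ℝ) + 1) * X.weight β :=
          Finset.sum_congr rfl fun β hβ => by
            rw [X.card_verts_filter (Finset.mem_filter.1 hβ).1 (Finset.mem_filter.1 hβ).2]
      _ = (d : ℝ) + 1 := by rw [← Finset.mul_sum, X.tops_weight_sum, mul_one]
  have hex : ∃ σ ∈ X.faces.filter (fun α => α.card = 1), X.Qv σ ≤ 1 / 2 := by
    apply Finset.exists_le_of_sum_le hVne
    rw [hsumQ, Finset.sum_const, nsmul_eq_mul]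
    have h2 : ((2 * (d + 1) : ℕ) : ℝ) ≤ ((X.faces.filter (fun α => α.card = 1)).card : ℝ) := by
      exact_mod_cast hn
    push_cast at h2
    linarith
  obtain ⟨σ, hσVs, hσhalf⟩ := hex
  obtain ⟨v, rfl⟩ := Finset.card_eq_one.1 (Finset.mem_filter.1 hσVs).2
  have hvface : ({v} : Finset V) ∈ X.faces := (Finset.mem_filter.1 hσVs).1
  set c : ℝ := X.Qv {v} with hcdef
  have hcpos : 0 < c := X.Qv_pos hvface
  have hchalf : c ≤ 1 / 2 := hσhalf
  set f : Finset V → ℝ := fun β => (if v ∈ β then (1 : ℝ) else 0) - c with hf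
  -- orthogonality
  have hws : ∑ β ∈ X.tops, X.weight β * f β = 0 := by
    rw [show (∑ β ∈ X.tops, X.weight β * f β)
          = ∑ β ∈ X.tops, X.weight β * ((if v ∈ β then (1 : ℝ) else 0) - c) from rfl]
    rw [X.wit_sum v c X.tops, X.tops_weight_sum, ← WSC.Qv_singleton, ← hcdef]
    ring
  have horth : X.inn (d + 1) f (fun _ => 1) = 0 := by
    rw [X.inn_one_eq, hws]
  -- value of ⟨f, f⟩
  have hcw : ∑ β ∈ X.tops.filter (fun β => v ∈ β), X.weight β = c := by
    rw [hcdef, WSC.Qv_singleton]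
  have hncw : ∑ β ∈ X.tops.filter (fun β => ¬ v ∈ β), X.weight β = 1 - c := by
    have h2 := Finset.sum_filter_add_sum_filter_not X.tops (fun β => v ∈ β) X.weight
    rw [X.tops_weight_sum, hcw] at h2
    linarith
  have hff : X.inn (d + 1) f f = c * (1 - c) := by
    rw [X.inn_self_eq]
    rw [← Finset.sum_filter_add_sum_filter_not X.tops (fun β => v ∈ β)
      (fun β => X.weight β * f β * f β)]
    have e1 : ∑ β ∈ X.tops.filter (fun β => v ∈ β), X.weight β * f β * f β
        = c * ((1 - c) * (1 - c)) := by
      calc ∑ β ∈ X.tops.filter (fun β => v ∈ β), X.weight β * f β * f β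
          = ∑ β ∈ X.tops.filter (fun β => v ∈ β), X.weight β * ((1 - c) * (1 - c)) :=
            Finset.sum_congr rfl fun β hβ => by
              simp only [hf]
              rw [if_pos (Finset.mem_filter.1 hβ).2]
              ring
        _ = c * ((1 - c) * (1 - c)) := by rw [← Finset.sum_mul, hcw]
    have e2 : ∑ β ∈ X.tops.filter (fun β => ¬ v ∈ β), X.weight β * f β * f β
        = (1 - c) * (c * c) := by
      calc ∑ β ∈ X.tops.filter (fun β => ¬ v ∈ β), X.weight β * f β * f β
          = ∑ β ∈ X.tops.filter (fun β => ¬ v ∈ β), X.weight β * (c * c) :=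
            Finset.sum_congr rfl fun β hβ => by
              simp only [hf]
              rw [if_neg (Finset.mem_filter.1 hβ).2]
              ring
        _ = (1 - c) * (c * c) := by rw [← Finset.sum_mul, hncw]
    rw [e1, e2]
    ring
  have hffpos : 0 < X.inn (d + 1) f f := by
    rw [hff]
    nlinarith
  have hffne : X.inn (d + 1) f f ≠ 0 := hffpos.ne'
  -- expansion of ⟨f, P f⟩
  have hexp : X.inn (d + 1) f (X.downUp f)
      = (∑ α ∈ X.cod1, X.Av v α * X.Av v α / X.Qv α) / ((d : ℝ) + 1) - c * c := by
    rw [X.inn_downUp_eq]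
    have hpt : ∀ α ∈ X.cod1, (X.Tv f α) ^ 2 / (((d : ℝ) + 1) * X.Qv α)
        = X.Av v α * X.Av v α / X.Qv α / ((d : ℝ) + 1)
          - (2 * c / ((d : ℝ) + 1)) * X.Av v α + (c * c / ((d : ℝ) + 1)) * X.Qv α := by
      intro α hα
      have hQ : X.Qv α ≠ 0 := (X.Qv_pos (Finset.mem_filter.1 hα).1).ne'
      rw [show X.Tv f α = X.Av v α - c * X.Qv α from by rw [hf]; exact X.Tv_witness v c α]
      field_simp
      ring
    rw [Finset.sum_congr rfl hpt, Finset.sum_add_distrib, Finset.sum_sub_distrib,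
      ← Finset.sum_div, ← Finset.mul_sum, ← Finset.mul_sum, X.sum_Av, X.sum_Qv, ← hcdef]
    field_simp
    ring
  -- lower bound for the main sum
  have hA2 : (d : ℝ) * c ≤ ∑ α ∈ X.cod1, X.Av v α * X.Av v α / X.Qv α := by
    have h1 : ∑ α ∈ X.cod1.filter (fun α => v ∈ α), X.Av v α * X.Av v α / X.Qv α
        = (d : ℝ) * c := by
      rw [hcdef, ← X.sum_Qv_mem v]
      refine Finset.sum_congr rfl fun α hα => ?_
      obtain ⟨hα1, hvα⟩ := Finset.mem_filter.1 hα
      have hQ : X.Qv α ≠ 0 := (X.Qv_pos (Finset.mem_filter.1 hα1).1).ne'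
      rw [X.Av_eq_Qv hvα, mul_div_assoc, div_self hQ, mul_one]
    rw [← h1]
    refine Finset.sum_le_sum_of_subset_of_nonneg (Finset.filter_subset _ _) ?_
    intro α hα _
    exact div_nonneg (mul_self_nonneg _) (X.Qv_nonneg α)
  -- the key inequality
  have hkey : (1 - 2 / ((d : ℝ) + 1)) * (c * (1 - c))
      ≤ X.inn (d + 1) f (X.downUp f) := by
    rw [hexp]
    have h1 : (d : ℝ) * c / ((d : ℝ) + 1)
        ≤ (∑ α ∈ X.cod1, X.Av v α * X.Av v α / X.Qv α) / ((d : ℝ) + 1) := by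
      gcongr
    have h2 : (1 - 2 / ((d : ℝ) + 1)) * (c * (1 - c))
        ≤ (d : ℝ) * c / ((d : ℝ) + 1) - c * c := by
      rw [show (1 : ℝ) - 2 / ((d : ℝ) + 1) = ((d : ℝ) - 1) / ((d : ℝ) + 1) from by
        field_simp
        ring]
      rw [show (d : ℝ) * c / ((d : ℝ) + 1) - c * c
          = ((d : ℝ) * c - ((d : ℝ) + 1) * (c * c)) / ((d : ℝ) + 1) from by
        field_simp]
      rw [div_mul_eq_mul_div, div_le_div_iff₀ hd1 hd1]
      have hAB : ((d : ℝ) - 1) * (c * (1 - c)) ≤ (d : ℝ) * c - ((d : ℝ) + 1) * (c * c) := by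
        nlinarith
      exact mul_le_mul_of_nonneg_right hAB hd1.le
    linarith
  -- Rayleigh quotient of the witness
  have hray : 1 - 2 / ((d : ℝ) + 1)
      ≤ X.inn (d + 1) f (X.downUp f) / X.inn (d + 1) f f := by
    rw [le_div_iff₀ hffpos, hff]
    exact hkey
  -- boundedness of the Rayleigh set
  have hbdd : BddAbove {r : ℝ | ∃ g : Finset V → ℝ,
      X.inn (d + 1) g (fun _ => 1) = 0 ∧ X.inn (d + 1) g g ≠ 0 ∧
      r = X.inn (d + 1) g (X.downUp g) / X.inn (d + 1) g g} := by
    refine ⟨1, ?_⟩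
    rintro r ⟨g, _, hg2, rfl⟩
    have h0 : 0 < X.inn (d + 1) g g := lt_of_le_of_ne (X.inn_self_nonneg g) (Ne.symm hg2)
    rw [div_le_one h0]
    exact X.inn_downUp_le_inn_self g
  refine hray.trans ?_
  unfold WSC.lam2
  exact le_csSup hbdd ⟨f, horth, hffne, rfl⟩
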